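/- arXiv:1310.4607 — 2 statements merged into one kernel-verified Lean document; each statement's English description precedes it below -/
import Mathlib

section
/- Let ξ and η be positive irrational real numbers with ξ > 1 and ξ·η = m for a positive natural number m. If 0 ≤ n < N, then |m·q_n/p_n − η| > |m·q_N/p_N − η|. In particular, two different connections in the ladder of (ξ, η) do not intersect: the order of the corresponding approximations m·q/p to η agrees with the order of the convergents p/q to ξ. -/
/-- Complete quotients: `cq ξ 0 = ξ`, `cq ξ (n+1) = 1/(cq ξ n - ⌊cq ξ n⌋)`. -/
noncomputable def cq (ξ : ℝ) : ℕ → ℝ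
  | 0 => ξ
  | n + 1 => 1 / (cq ξ n - ⌊cq ξ n⌋)

/-- Partial quotients: `pquot ξ n = b_n = ⌊ξ_n⌋`. -/
noncomputable def pquot (ξ : ℝ) (n : ℕ) : ℤ := ⌊cq ξ n⌋

/-- Convergent numerators, shifted by one: `cnum ξ 0 = p_{-1} = 1`,
`cnum ξ 1 = p_0 = b_0`, and `cnum ξ (n+1) = p_n = b_n p_{n-1} + p_{n-2}`. -/
noncomputable def cnum (ξ : ℝ) : ℕ → ℤ
  | 0 => 1
  | 1 => pquot ξ 0
  | n + 2 => pquot ξ (n + 1) * cnum ξ (n + 1) + cnum ξ n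

/-- Convergent denominators, shifted by one: `cden ξ 0 = q_{-1} = 0`,
`cden ξ 1 = q_0 = 1`, and `cden ξ (n+1) = q_n = b_n q_{n-1} + q_{n-2}`. -/
noncomputable def cden (ξ : ℝ) : ℕ → ℤ
  | 0 => 0
  | 1 => 1
  | n + 2 => pquot ξ (n + 1) * cden ξ (n + 1) + cden ξ n

lemma cq_irr (ξ : ℝ) (h : Irrational ξ) : ∀ n, Irrational (cq ξ n)
  | 0 => h
  | n + 1 => by
    have ih := cq_irr ξ h n
    have h1 : Irrational (cq ξ n - ⌊cq ξ n⌋) := ih.sub_intCast _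
    have := h1.inv
    simpa [cq, one_div] using this

lemma cq_gt_one (ξ : ℝ) (h : Irrational ξ) (h1 : 1 < ξ) : ∀ n, 1 < cq ξ n
  | 0 => h1
  | n + 1 => by
    have hirr := cq_irr ξ h n
    have hfr : cq ξ n - ⌊cq ξ n⌋ = Int.fract (cq ξ n) := rfl
    have hpos : 0 < Int.fract (cq ξ n) :=
      Int.fract_pos.mpr (hirr.ne_int ⌊cq ξ n⌋)
    have hlt : Int.fract (cq ξ n) < 1 := Int.fract_lt_one _
    show 1 < 1 / (cq ξ n - ⌊cq ξ n⌋)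
    rw [hfr]
    exact one_lt_one_div hpos hlt

lemma pquot_ge_one (ξ : ℝ) (h : Irrational ξ) (h1 : 1 < ξ) (n : ℕ) :
    1 ≤ pquot ξ n := by
  have := cq_gt_one ξ h h1 n
  exact Int.le_floor.mpr (by exact_mod_cast this.le)

lemma cnum_ge_one (ξ : ℝ) (h : Irrational ξ) (h1 : 1 < ξ) : ∀ n, 1 ≤ cnum ξ n
  | 0 => le_refl _
  | 1 => pquot_ge_one ξ h h1 0
  | n + 2 => by
    have a := cnum_ge_one ξ h h1 (n + 1)
    have b := cnum_ge_one ξ h h1 n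
    have c := pquot_ge_one ξ h h1 (n + 1)
    show 1 ≤ pquot ξ (n + 1) * cnum ξ (n + 1) + cnum ξ n
    nlinarith

lemma cnum_mono (ξ : ℝ) (h : Irrational ξ) (h1 : 1 < ξ) (n : ℕ) :
    cnum ξ (n + 1) ≤ cnum ξ (n + 2) := by
  have a := cnum_ge_one ξ h h1 (n + 1)
  have b := cnum_ge_one ξ h h1 n
  have c := pquot_ge_one ξ h h1 (n + 1)
  show cnum ξ (n + 1) ≤ pquot ξ (n + 1) * cnum ξ (n + 1) + cnum ξ n
  nlinarith

lemma cnum_le (ξ : ℝ) (h : Irrational ξ) (h1 : 1 < ξ) {a b : ℕ} (hab : a ≤ b) :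
    cnum ξ (a + 1) ≤ cnum ξ (b + 1) := by
  have : Monotone (fun k => cnum ξ (k + 1)) :=
    monotone_nat_of_le_succ (fun k => cnum_mono ξ h h1 k)
  exact this hab

/-- `D n = cden n * ξ - cnum n`; key recurrence `cq ξ (n+1) * D (n+1) = - D n`. -/
lemma key (ξ : ℝ) (h : Irrational ξ) (h1 : 1 < ξ) : ∀ n,
    cq ξ (n + 1) * ((cden ξ (n + 1) : ℝ) * ξ - cnum ξ (n + 1)) =
      -((cden ξ n : ℝ) * ξ - cnum ξ n)
  | 0 => by
    have hne : ξ - (⌊ξ⌋ : ℝ) ≠ 0 := sub_ne_zero_of_ne (h.ne_int ⌊ξ⌋)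
    show (1 / (cq ξ 0 - (⌊cq ξ 0⌋ : ℝ))) * ((cden ξ 1 : ℝ) * ξ - (cnum ξ 1 : ℝ)) =
      -((cden ξ 0 : ℝ) * ξ - (cnum ξ 0 : ℝ))
    have e0 : cq ξ 0 = ξ := rfl
    have e1 : (cden ξ 1 : ℝ) = 1 := by norm_num [cden]
    have e2 : (cnum ξ 1 : ℝ) = (⌊ξ⌋ : ℝ) := by norm_num [cnum, pquot, cq]
    have e3 : (cden ξ 0 : ℝ) = 0 := by norm_num [cden]
    have e4 : (cnum ξ 0 : ℝ) = 1 := by norm_num [cnum]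
    rw [e0, e1, e2, e3, e4]
    field_simp
    ring
  | n + 1 => by
    have ih := key ξ h h1 n
    have hirr := cq_irr ξ h (n + 1)
    have hne : cq ξ (n + 1) - (⌊cq ξ (n + 1)⌋ : ℝ) ≠ 0 := by
      intro hz
      exact (hirr.sub_intCast ⌊cq ξ (n + 1)⌋) ⟨0, by simp [hz.symm]⟩
    have hrec : cq ξ (n + 2) * (cq ξ (n + 1) - (⌊cq ξ (n + 1)⌋ : ℝ)) = 1 := by
      show (1 / (cq ξ (n + 1) - (⌊cq ξ (n + 1)⌋ : ℝ))) * _ = 1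
      field_simp
    have hP : (cnum ξ (n + 2) : ℝ) =
        (pquot ξ (n + 1) : ℝ) * cnum ξ (n + 1) + cnum ξ n := by
      show ((pquot ξ (n + 1) * cnum ξ (n + 1) + cnum ξ n : ℤ) : ℝ) = _
      push_cast; ring
    have hQ : (cden ξ (n + 2) : ℝ) =
        (pquot ξ (n + 1) : ℝ) * cden ξ (n + 1) + cden ξ n := by
      show ((pquot ξ (n + 1) * cden ξ (n + 1) + cden ξ n : ℤ) : ℝ) = _
      push_cast; ring
    have hpq : (pquot ξ (n + 1) : ℝ) = (⌊cq ξ (n + 1)⌋ : ℝ) := by simp [pquot]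
    rw [hP, hQ, hpq]
    linear_combination cq ξ (n + 2) * ih -
      ((cden ξ (n + 1) : ℝ) * ξ - (cnum ξ (n + 1) : ℝ)) * hrec

lemma D_ne (ξ : ℝ) (h : Irrational ξ) (h1 : 1 < ξ) : ∀ n,
    (cden ξ n : ℝ) * ξ - cnum ξ n ≠ 0
  | 0 => by norm_num [cden, cnum]
  | n + 1 => by
    have ih := D_ne ξ h h1 n
    have hk := key ξ h h1 n
    intro hz
    rw [hz, mul_zero] at hk
    exact ih (by linarith)

lemma D_strict (ξ : ℝ) (h : Irrational ξ) (h1 : 1 < ξ) (n : ℕ) :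
    |(cden ξ (n + 1) : ℝ) * ξ - cnum ξ (n + 1)| < |(cden ξ n : ℝ) * ξ - cnum ξ n| := by
  have hk := key ξ h h1 n
  have hgt := cq_gt_one ξ h h1 (n + 1)
  have hne := D_ne ξ h h1 (n + 1)
  calc |(cden ξ (n + 1) : ℝ) * ξ - cnum ξ (n + 1)|
      < cq ξ (n + 1) * |(cden ξ (n + 1) : ℝ) * ξ - cnum ξ (n + 1)| := by
        nlinarith [abs_pos.mpr hne]
    _ = |cq ξ (n + 1) * ((cden ξ (n + 1) : ℝ) * ξ - cnum ξ (n + 1))| := by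
        rw [abs_mul, abs_of_pos (by linarith : (0:ℝ) < cq ξ (n + 1))]
    _ = |(cden ξ n : ℝ) * ξ - cnum ξ n| := by rw [hk, abs_neg]

lemma D_lt (ξ : ℝ) (h : Irrational ξ) (h1 : 1 < ξ) {a b : ℕ} (hab : a < b) :
    |(cden ξ b : ℝ) * ξ - cnum ξ b| < |(cden ξ a : ℝ) * ξ - cnum ξ a| := by
  have : StrictAnti (fun k => |(cden ξ k : ℝ) * ξ - cnum ξ k|) :=
    strictAnti_nat_of_succ_lt (fun k => D_strict ξ h h1 k)
  exact this hab

/-- Proposition 2.3: two different connections do not intersect; the order of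
the approximations `m q/p` to `η` agrees with the order of the convergents
`p/q` to `ξ`. -/
theorem connections_do_not_intersect
    (ξ η : ℝ) (m : ℕ) (hξpos : 0 < ξ) (hηpos : 0 < η) (hξ1 : 1 < ξ)
    (hξirr : Irrational ξ) (hηirr : Irrational η) (hm : 0 < m)
    (hmul : ξ * η = m) (n N : ℕ) (hnN : n < N) :
    |(m : ℝ) * (cden ξ (n + 1) : ℝ) / (cnum ξ (n + 1) : ℝ) - η| >
    |(m : ℝ) * (cden ξ (N + 1) : ℝ) / (cnum ξ (N + 1) : ℝ) - η| := by
  have hη : η = m / ξ := by field_simp [ne_of_gt hξpos] at hmul ⊢; linarith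
  have key : ∀ k : ℕ, |(m : ℝ) * (cden ξ (k + 1) : ℝ) / (cnum ξ (k + 1) : ℝ) - η|
      = m * |(cden ξ (k + 1) : ℝ) * ξ - cnum ξ (k + 1)| / ((cnum ξ (k + 1) : ℝ) * ξ) := by
    intro k
    have hP : (1 : ℝ) ≤ (cnum ξ (k + 1) : ℝ) := by
      exact_mod_cast cnum_ge_one ξ hξirr hξ1 (k + 1)
    have hPne : (cnum ξ (k + 1) : ℝ) ≠ 0 := by linarith
    have : (m : ℝ) * (cden ξ (k + 1) : ℝ) / (cnum ξ (k + 1) : ℝ) - η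
        = m * ((cden ξ (k + 1) : ℝ) * ξ - cnum ξ (k + 1)) / ((cnum ξ (k + 1) : ℝ) * ξ) := by
      rw [hη]; field_simp
    rw [this, abs_div, abs_mul, abs_of_nonneg (by positivity : (0:ℝ) ≤ (m:ℝ)),
      abs_of_pos (by nlinarith : (0:ℝ) < (cnum ξ (k + 1) : ℝ) * ξ)]
  rw [key n, key N]
  have hPn : (1 : ℝ) ≤ (cnum ξ (n + 1) : ℝ) := by
    exact_mod_cast cnum_ge_one ξ hξirr hξ1 (n + 1)
  have hPle : (cnum ξ (n + 1) : ℝ) ≤ (cnum ξ (N + 1) : ℝ) := by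
    exact_mod_cast cnum_le ξ hξirr hξ1 hnN.le
  have hD := D_lt ξ hξirr hξ1 (Nat.succ_lt_succ hnN)
  have hDpos : 0 < |(cden ξ (n + 1) : ℝ) * ξ - cnum ξ (n + 1)| :=
    abs_pos.mpr (D_ne ξ hξirr hξ1 (n + 1))
  have hm' : (0 : ℝ) < m := by exact_mod_cast hm
  calc (m : ℝ) * |(cden ξ (N + 1) : ℝ) * ξ - cnum ξ (N + 1)| / ((cnum ξ (N + 1) : ℝ) * ξ)
      ≤ (m : ℝ) * |(cden ξ (N + 1) : ℝ) * ξ - cnum ξ (N + 1)| / ((cnum ξ (n + 1) : ℝ) * ξ) := by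
        apply div_le_div_of_nonneg_left (by positivity) (by nlinarith) (by nlinarith)
    _ < (m : ℝ) * |(cden ξ (n + 1) : ℝ) * ξ - cnum ξ (n + 1)| / ((cnum ξ (n + 1) : ℝ) * ξ) := by
        have hd : (0 : ℝ) < (cnum ξ (n + 1) : ℝ) * ξ := by nlinarith
        rw [div_lt_div_iff₀ hd hd]
        have hDn : |(cden ξ (N + 1) : ℝ) * ξ - cnum ξ (N + 1)| <
            |(cden ξ (n + 1) : ℝ) * ξ - cnum ξ (n + 1)| := hD
        nlinarith [mul_pos hm' hd]
end

section
/- Let ξ and η be positive irrational real numbers and m a positive natural number with ξ·η = m. Suppose the three consecutive pairs (n−1, k−1), (n, k) and (n+1, k+1) are all connected, where n ≥ 2 and k ≥ 2, and set r = p_{n−1}/Q_{k−1}, s = P_{k−1}/q_{n−1}. Then for the middle connection one has r·b_n − s·B_k = 0. -/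
private lemma irrational_cq {ξ : ℝ} (h : Irrational ξ) : ∀ n, Irrational (cq ξ n)
  | 0 => h
  | (n+1) => by
      have ih := irrational_cq h n
      have h1 : Irrational (cq ξ n - ⌊cq ξ n⌋) := ih.sub_intCast _
      rw [cq, one_div]
      exact h1.inv

private lemma one_lt_cq {ξ : ℝ} (h : Irrational ξ) (n : ℕ) : 1 < cq ξ (n+1) := by
  have ih := irrational_cq h n
  have h0 : ((⌊cq ξ n⌋ : ℝ)) < cq ξ n :=
    lt_of_le_of_ne (Int.floor_le _) (Ne.symm (ih.ne_int _))
  have h2 : cq ξ n - ⌊cq ξ n⌋ < 1 := by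
    have := Int.lt_floor_add_one (cq ξ n); linarith
  have h3 : (0:ℝ) < cq ξ n - ⌊cq ξ n⌋ := by linarith
  rw [cq, lt_div_iff₀ h3]
  linarith

private lemma one_le_pquot {ξ : ℝ} (h : Irrational ξ) (n : ℕ) : 1 ≤ pquot ξ (n+1) :=
  Int.le_floor.2 (by exact_mod_cast (one_lt_cq h n).le)

private lemma cden_pos {ξ : ℝ} (h : Irrational ξ) : ∀ n, 0 < cden ξ (n+1) ∧ 0 ≤ cden ξ n
  | 0 => ⟨one_pos, le_refl 0⟩
  | (n+1) => by
      obtain ⟨h1, h2⟩ := cden_pos h n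
      have hb : 1 ≤ pquot ξ (n+1) := one_le_pquot h n
      refine ⟨?_, h1.le⟩
      rw [show n+1+1 = n+2 from rfl, cden]
      nlinarith

private lemma cnum_nonneg {ξ : ℝ} (hpos : 0 < ξ) (h : Irrational ξ) :
    ∀ n, 0 ≤ cnum ξ n ∧ 0 ≤ cnum ξ (n+1)
  | 0 => ⟨zero_le_one, Int.floor_nonneg.2 hpos.le⟩
  | (n+1) => by
      obtain ⟨h1, h2⟩ := cnum_nonneg hpos h n
      have hb : 1 ≤ pquot ξ (n+1) := one_le_pquot h n
      refine ⟨h2, ?_⟩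
      rw [show n+1+1 = n+2 from rfl, cnum]
      nlinarith

private lemma cf_det (ξ : ℝ) :
    ∀ n, cnum ξ (n+1) * cden ξ n - cnum ξ n * cden ξ (n+1) = (-1)^(n+1)
  | 0 => by simp [cnum, cden]
  | (n+1) => by
      have ih := cf_det ξ n
      rw [show n+1+1 = n+2 by rfl, cnum, cden, pow_succ, pow_succ]
      linear_combination (-1 : ℤ) * ih

private lemma isCoprime_of_det {x y u v : ℤ} (t : ℕ) (h : u * x - v * y = (-1)^t) :
    IsCoprime x y := by
  refine ⟨(-1)^t * u, -((-1)^t * v), ?_⟩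
  have h1 : ((-1:ℤ))^t * (-1)^t = 1 := by
    rw [← pow_add]; exact Even.neg_one_pow ⟨t, by ring⟩
  linear_combination ((-1:ℤ)^t) * h + h1

/-- Lemma 2.9: for three consecutive connections, the middle one satisfies
`r·b_n - s·B_k = 0`. -/
theorem three_consecutive_connections_middle
    (ξ η : ℝ) (m : ℕ) (hξpos : 0 < ξ) (hηpos : 0 < η)
    (hξirr : Irrational ξ) (hηirr : Irrational η) (hm : 0 < m)
    (hmul : ξ * η = m) (n k : ℕ) (hn : 2 ≤ n) (hk : 2 ≤ k)
    (hconnPrev : cnum ξ (n - 1) * cnum η (k - 1) =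
      (m : ℤ) * cden ξ (n - 1) * cden η (k - 1))
    (hconn : cnum ξ n * cnum η k = (m : ℤ) * cden ξ n * cden η k)
    (hconnNext : cnum ξ (n + 1) * cnum η (k + 1) =
      (m : ℤ) * cden ξ (n + 1) * cden η (k + 1)) :
    (cnum ξ n / cden η k) * pquot ξ n - (cnum η k / cden ξ n) * pquot η k = 0 := by
  obtain ⟨N, rfl⟩ : ∃ N, n = N + 2 := ⟨n - 2, by omega⟩
  obtain ⟨K, rfl⟩ : ∃ K, k = K + 2 := ⟨k - 2, by omega⟩
  rw [show N + 2 - 1 = N + 1 by omega, show K + 2 - 1 = K + 1 by omega] at hconnPrev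
  have hnum3 : cnum ξ (N+2+1) = pquot ξ (N+2) * cnum ξ (N+2) + cnum ξ (N+1) := by
    rw [show N+2+1 = N+1+2 from rfl, cnum]
  have hden3 : cden ξ (N+2+1) = pquot ξ (N+2) * cden ξ (N+2) + cden ξ (N+1) := by
    rw [show N+2+1 = N+1+2 from rfl, cden]
  have hNum3 : cnum η (K+2+1) = pquot η (K+2) * cnum η (K+2) + cnum η (K+1) := by
    rw [show K+2+1 = K+1+2 from rfl, cnum]
  have hDen3 : cden η (K+2+1) = pquot η (K+2) * cden η (K+2) + cden η (K+1) := by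
    rw [show K+2+1 = K+1+2 from rfl, cden]
  rw [hnum3, hden3, hNum3, hDen3] at hconnNext
  set b : ℤ := pquot ξ (N+2) with hbdef
  set B : ℤ := pquot η (K+2) with hBdef
  set a : ℤ := cnum ξ (N+2) with hadef
  set a' : ℤ := cnum ξ (N+1) with ha'def
  set c : ℤ := cden ξ (N+2) with hcdef
  set c' : ℤ := cden ξ (N+1) with hc'def
  set A : ℤ := cnum η (K+2) with hAdef
  set A' : ℤ := cnum η (K+1) with hA'def
  set C : ℤ := cden η (K+2) with hCdef
  set C' : ℤ := cden η (K+1) with hC'def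
  have hD : a * c' - a' * c = (-1:ℤ)^(N+2) := by
    rw [hadef, ha'def, hcdef, hc'def]; exact cf_det ξ (N+1)
  have hE : A * C' - A' * C = (-1:ℤ)^(K+2) := by
    rw [hAdef, hA'def, hCdef, hC'def]; exact cf_det η (K+1)
  have hDp : a' * cden ξ N - cnum ξ N * c' = (-1:ℤ)^(N+1) := by
    rw [ha'def, hc'def]; exact cf_det ξ N
  have hEp : A' * cden η K - cnum η K * C' = (-1:ℤ)^(K+1) := by
    rw [hA'def, hC'def]; exact cf_det η K
  have hc : 0 < c := by rw [hcdef]; exact (cden_pos hξirr (N+1)).1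
  have hc' : 0 < c' := by rw [hc'def]; exact (cden_pos hξirr N).1
  have hC : 0 < C := by rw [hCdef]; exact (cden_pos hηirr (K+1)).1
  have hC' : 0 < C' := by rw [hC'def]; exact (cden_pos hηirr K).1
  have ha0 : 0 ≤ a := by rw [hadef]; exact (cnum_nonneg hξpos hξirr (N+1)).2
  have hA'0 : 0 ≤ A' := by rw [hA'def]; exact (cnum_nonneg hηpos hηirr K).2
  clear_value b B a a' c c' A A' C C'
  -- coprimality of convergents
  have hcop_ac : IsCoprime a c :=
    isCoprime_of_det (u := c') (v := a') (N+2) (by linear_combination hD)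
  have hcop_AC : IsCoprime A C :=
    isCoprime_of_det (u := C') (v := A') (K+2) (by linear_combination hE)
  have hcop_a'c' : IsCoprime a' c' :=
    isCoprime_of_det (u := cden ξ N) (v := cnum ξ N) (N+1) (by linear_combination hDp)
  have hcop_A'C' : IsCoprime A' C' :=
    isCoprime_of_det (u := cden η K) (v := cnum η K) (K+1) (by linear_combination hEp)
  -- divisibilities
  have hCa : C ∣ a :=
    (hcop_AC.symm).dvd_of_dvd_mul_right ⟨(m:ℤ) * c, by linear_combination hconn⟩
  have hcA : c ∣ A :=
    hcop_ac.symm.dvd_of_dvd_mul_left ⟨(m:ℤ) * C, by linear_combination hconn⟩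
  have hC'a' : C' ∣ a' :=
    (hcop_A'C'.symm).dvd_of_dvd_mul_right ⟨(m:ℤ) * c', by linear_combination hconnPrev⟩
  have hc'A' : c' ∣ A' :=
    hcop_a'c'.symm.dvd_of_dvd_mul_left ⟨(m:ℤ) * C', by linear_combination hconnPrev⟩
  obtain ⟨r, hr⟩ := hCa
  obtain ⟨s, hs⟩ := hcA
  obtain ⟨r', hr'⟩ := hC'a'
  obtain ⟨s', hs'⟩ := hc'A'
  -- r*s = m, r'*s' = m
  have hm1 : r * s = (m:ℤ) := by
    have h2 : c * C * (r * s) = c * C * (m:ℤ) := by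
      rw [hr, hs] at hconn; linear_combination hconn
    exact mul_left_cancel₀ (ne_of_gt (mul_pos hc hC)) h2
  have hm2 : r' * s' = (m:ℤ) := by
    have h2 : c' * C' * (r' * s') = c' * C' * (m:ℤ) := by
      rw [hr', hs'] at hconnPrev; linear_combination hconnPrev
    exact mul_left_cancel₀ (ne_of_gt (mul_pos hc' hC')) h2
  -- coprimality of r,r' and s,s'
  rw [hr, hr'] at hD
  rw [hs, hs'] at hE
  have hcop_rr' : IsCoprime r r' :=
    isCoprime_of_det (u := C * c') (v := C' * c) (N+2) (by linear_combination hD)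
  have hcop_ss' : IsCoprime s s' :=
    isCoprime_of_det (u := c * C') (v := c' * C) (K+2) (by linear_combination hE)
  -- r = s'
  have hrds' : r ∣ s' := hcop_rr'.dvd_of_dvd_mul_left ⟨s, by linear_combination hm2 - hm1⟩
  have hs'dr : s' ∣ r := (hcop_ss'.symm).dvd_of_dvd_mul_left ⟨r', by linear_combination hm1 - hm2⟩
  have h0r : 0 ≤ r := by
    have h5 := ha0; rw [hr] at h5
    exact nonneg_of_mul_nonneg_right h5 hC
  have h0s' : 0 ≤ s' := by
    have h5 := hA'0; rw [hs'] at h5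
    exact nonneg_of_mul_nonneg_right h5 hc'
  have heq : r = s' := Int.dvd_antisymm h0r h0s' hrds' hs'dr
  -- key equation from the three connections
  have key : b * (a * A') + B * (a' * A) =
      (m:ℤ) * (b * (c * C')) + (m:ℤ) * (B * (c' * C)) := by
    linear_combination hconnNext - (b * B) * hconn - hconnPrev
  rw [hr, hr', hs, hs'] at key
  have key2 : (b * s' - B * s) * ((C * c') * r - (C' * c) * r') = 0 := by
    linear_combination key - (b * c * C') * hm2 - (B * c' * C) * hm1
  have h4 : (b * s' - B * s) * ((-1:ℤ))^(N+2) = 0 := by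
    linear_combination key2 - (b * s' - B * s) * hD
  have hbs : b * s' = B * s := by
    rcases mul_eq_zero.1 h4 with h | h
    · linarith
    · exact absurd h (pow_ne_zero _ (by norm_num))
  -- finish
  rw [hr, hs, Int.mul_ediv_cancel_left _ (ne_of_gt hC), Int.mul_ediv_cancel_left _ (ne_of_gt hc)]
  rw [heq]
  linear_combination hbs
end
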